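/- Let n ≥ 3 and let A be the Artin group of type B_n with Coxeter group W and standard epimorphism μ: A → W. Then there is no group homomorphism Φ: A → A with μ ∘ Φ = ν_n^1, and, when n is odd, there is no group homomorphism Φ: A → A with μ ∘ Φ = ν_n^2. -/

import Mathlib

open Function

/-- The alternating word `⟨i j⟩^m = i j i j ⋯` with `m` factors, in the free group. -/
def altWord {α : Type*} (i j : α) : ℕ → FreeGroup α
  | 0 => 1
  | m + 1 => FreeGroup.of i * altWord j i m

/-- The braid relations of an Artin group of type `M` (an entry `0` encodes `∞`). -/
def artinRels {n : ℕ} (M : Matrix (Fin n) (Fin n) ℕ) : Set (FreeGroup (Fin n)) :=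
  {r | ∃ i j : Fin n, i ≠ j ∧ M i j ≠ 0 ∧
      r = altWord i j (M i j) * (altWord j i (M i j))⁻¹}

/-- The relations of the Coxeter group of type `M`. -/
def coxRels {n : ℕ} (M : Matrix (Fin n) (Fin n) ℕ) : Set (FreeGroup (Fin n)) :=
  artinRels M ∪ {r | ∃ i : Fin n, r = FreeGroup.of i ^ 2}

/-- The Artin group of type `M`. -/
abbrev ArtinGroup {n : ℕ} (M : Matrix (Fin n) (Fin n) ℕ) : Type :=
  PresentedGroup (artinRels M)

/-- The Coxeter group of type `M`, as the quotient of the Artin group by `σᵢ² = 1`. -/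
abbrev CoxGroup {n : ℕ} (M : Matrix (Fin n) (Fin n) ℕ) : Type :=
  PresentedGroup (coxRels M)

/-- The standard generators `σᵢ` of the Artin group. -/
def σA {n : ℕ} (M : Matrix (Fin n) (Fin n) ℕ) (i : Fin n) : ArtinGroup M :=
  PresentedGroup.of i

/-- The standard generators `sᵢ` of the Coxeter group. -/
def sC {n : ℕ} (M : Matrix (Fin n) (Fin n) ℕ) (i : Fin n) : CoxGroup M :=
  PresentedGroup.of i

lemma lift_of_eq_mk {n : ℕ} (M : Matrix (Fin n) (Fin n) ℕ) (r : FreeGroup (Fin n)) :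
    FreeGroup.lift (fun i => (PresentedGroup.of i : CoxGroup M)) r
      = PresentedGroup.mk (coxRels M) r := by
  have h : (FreeGroup.lift (fun i => (PresentedGroup.of i : CoxGroup M)))
      = PresentedGroup.mk (coxRels M) :=
    FreeGroup.ext_hom _ _ (fun x => by simp [PresentedGroup.of])
  rw [h]

/-- The standard epimorphism `μ : A → W`. -/
def stdEpi {n : ℕ} (M : Matrix (Fin n) (Fin n) ℕ) : ArtinGroup M →* CoxGroup M :=
  PresentedGroup.toGroup (f := fun i => (PresentedGroup.of i : CoxGroup M)) (by
    intro r hr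
    rw [lift_of_eq_mk]
    exact (QuotientGroup.eq_one_iff r).mpr
      (Subgroup.subset_normalClosure (Set.mem_union_left _ hr)))

@[simp] lemma stdEpi_of {n : ℕ} (M : Matrix (Fin n) (Fin n) ℕ) (i : Fin n) :
    stdEpi M (σA M i) = sC M i :=
  PresentedGroup.toGroup.of _

/-- `φ : A → W` is ordinary if it is `α ∘ μ` for some automorphism `α` of `W`. -/
def Ordinary {n : ℕ} {M : Matrix (Fin n) (Fin n) ℕ}
    (φ : ArtinGroup M →* CoxGroup M) : Prop :=
  ∃ α : CoxGroup M ≃* CoxGroup M, φ = α.toMonoidHom.comp (stdEpi M)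

/-- The Coxeter matrix of type `Bₙ` (0-indexed: `m₀₁ = 4`, `m_{i,i+1} = 3` for `i ≥ 1`,
all other off-diagonal entries `2`). -/
def BMat (n : ℕ) : Matrix (Fin n) (Fin n) ℕ := fun i j =>
  if i = j then 1
  else if ((i : ℕ) + 1 = j ∧ (i : ℕ) = 0) ∨ ((j : ℕ) + 1 = i ∧ (j : ℕ) = 0) then 4
  else if (i : ℕ) + 1 = j ∨ (j : ℕ) + 1 = i then 3
  else 2

/-- The generator `s_k` of the Coxeter group of type `Bₙ`, for a natural number index
(`1` if `k` is out of range). -/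
def sgB (n : ℕ) (k : ℕ) : CoxGroup (BMat n) :=
  if h : k < n then sC (BMat n) ⟨k, h⟩ else 1

/-- The element `c_k = s_k ⋯ s_1 s_0 s_1 ⋯ s_k` of the Coxeter group of type `Bₙ`. -/
def cB (n : ℕ) : ℕ → CoxGroup (BMat n)
  | 0 => sgB n 0
  | k + 1 => sgB n (k + 1) * cB n k * sgB n (k + 1)

/-- The longest element `δ = (s_0 s_1 ⋯ s_{n-1})ⁿ` of the Coxeter group of type `Bₙ`. -/
def deltaB (n : ℕ) : CoxGroup (BMat n) := (((List.range n).map (sgB n)).prod) ^ n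

/-- The generator values of the extraordinary epimorphism `ν_n^1` of type `Bₙ`. -/
def nu1B (n : ℕ) : Fin n → CoxGroup (BMat n) := fun i =>
  if (i : ℕ) = 0 then cB n 0 else cB n ((i : ℕ) - 1) * sgB n i

/-- The generator values of the extraordinary epimorphism `ν_n^2` of type `Bₙ` (`n` odd). -/
def nu2B (n : ℕ) : Fin n → CoxGroup (BMat n) := fun i =>
  if (i : ℕ) = 0 then deltaB n else cB n ((i : ℕ) - 1) * sgB n i

open Multiplicative

abbrev Vv : Type := ℕ → ℤ
abbrev Mm : Type := Vv → ZMod 2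

instance addAutVvGroup : Group (AddAut Vv) := inferInstanceAs (Group (Multiplicative (AddAut Vv)))

def sfun (a : ℕ) (v : Vv) : Vv := fun k =>
  if a = 0 then (if k = 0 then -(v 0) else v k)
  else if k = a then v (a-1) else if k = a-1 then v a else v k

lemma sfun_add (a : ℕ) (v w : Vv) : sfun a (v + w) = sfun a v + sfun a w := by
  funext k; simp only [sfun, Pi.add_apply]; split_ifs <;> ring

lemma sfun_invol (a : ℕ) : Function.Involutive (sfun a) := by
  intro v; funext k; simp only [sfun]
  split_ifs <;> subst_vars <;> first | rfl | exact neg_neg _ | omega | (congr 1; omega)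

def SA (a : ℕ) : AddAut Vv :=
{ toFun := sfun a, invFun := sfun a,
  left_inv := (sfun_invol a).leftInverse,
  right_inv := (sfun_invol a).rightInverse,
  map_add' := sfun_add a }

@[simp] lemma SA_apply (a : ℕ) (v : Vv) : SA a v = sfun a v := rfl
@[simp] lemma SA_symm_apply (a : ℕ) (v : Vv) : (SA a).symm v = sfun a v := rfl
@[simp] lemma AddAut.mul_apply' (g h : AddAut Vv) (v : Vv) : (g * h) v = g (h v) := rfl
@[simp] lemma AddAut.mul_symm_apply' (g h : AddAut Vv) (v : Vv) :
    (g * h).symm v = h.symm (g.symm v) := rfl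

def act (g : AddAut Vv) : AddAut Mm :=
{ toFun := fun f => fun v => f (g.symm v),
  invFun := fun f => fun v => f (g v),
  left_inv := fun f => by funext v; simp,
  right_inv := fun f => by funext v; simp,
  map_add' := fun f h => rfl }

@[simp] lemma act_one (f : Mm) : act 1 f = f := rfl

@[simp] lemma act_apply (g : AddAut Vv) (f : Mm) (v : Vv) : act g f v = f (g.symm v) := rfl

def phiH : AddAut Vv →* MulAut (Multiplicative Mm) :=
{ toFun := fun g => AddEquiv.toMultiplicative (act g),
  map_one' := by ext f; rfl,
  map_mul' := by intro g h; ext f; rfl }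

abbrev H : Type := SemidirectProduct (Multiplicative Mm) (AddAut Vv) phiH

open Classical in
noncomputable def sing (a : Vv) : Mm := fun v => if v = a then 1 else 0

def alph (a : ℕ) : Vv := fun k => if k = a then 1 else if k + 1 = a then -1 else 0

noncomputable def Ge (a : ℕ) : H := ⟨ofAdd (sing (alph a)), SA a⟩

@[simp] lemma act_sing (g : AddAut Vv) (a : Vv) : act g (sing a) = sing (g a) := by
  funext v; simp only [act_apply, sing]
  by_cases h : v = g a
  · rw [if_pos, if_pos h]; rw [h]; exact g.symm_apply_apply a
  · rw [if_neg, if_neg h]; intro hc; apply h; rw [← hc]; exact (g.apply_symm_apply v).symm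

def pt (a b c : ℤ) : Vv := fun k => if k = 0 then a else if k = 1 then b else if k = 2 then c else 0

lemma pt_inj {a b c d e f : ℤ} : pt a b c = pt d e f ↔ a = d ∧ b = e ∧ c = f := by
  constructor
  · intro h
    exact ⟨by simpa [pt] using congrFun h 0, by simpa [pt] using congrFun h 1,
      by simpa [pt] using congrFun h 2⟩
  · rintro ⟨rfl, rfl, rfl⟩; rfl

@[simp] lemma sing_pt (a b c d e f : ℤ) :
    sing (pt d e f) (pt a b c) = if a = d ∧ b = e ∧ c = f then 1 else 0 := by
  simp only [sing, pt_inj]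

@[simp] lemma sfun0_pt (a b c : ℤ) : sfun 0 (pt a b c) = pt (-a) b c := by
  funext k; rcases k with _|_|_|k <;> norm_num [sfun, pt] <;> (try (split_ifs <;> omega))
@[simp] lemma sfun1_pt (a b c : ℤ) : sfun 1 (pt a b c) = pt b a c := by
  funext k; rcases k with _|_|_|k <;> norm_num [sfun, pt] <;> (try (split_ifs <;> omega))
@[simp] lemma sfun2_pt (a b c : ℤ) : sfun 2 (pt a b c) = pt a c b := by
  funext k; rcases k with _|_|_|k <;> norm_num [sfun, pt] <;> (try (split_ifs <;> omega))

@[simp] lemma neg_pt (a b c : ℤ) : -(pt a b c) = pt (-a) (-b) (-c) := by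
  funext k; simp only [pt, Pi.neg_apply]; split_ifs <;> first | rfl | simp

lemma alph0_pt : alph 0 = pt 1 0 0 := by
  funext k; rcases k with _|_|_|k <;> norm_num [alph, pt] <;> (try (split_ifs <;> omega))
lemma alph1_pt : alph 1 = pt (-1) 1 0 := by
  funext k; rcases k with _|_|_|k <;> norm_num [alph, pt] <;> (try (split_ifs <;> omega))
lemma alph2_pt : alph 2 = pt 0 (-1) 1 := by
  funext k; rcases k with _|_|_|k <;> norm_num [alph, pt] <;> (try (split_ifs <;> omega))

@[simp] lemma phiH_ofAdd (g : AddAut Vv) (f : Mm) : phiH g (ofAdd f) = ofAdd (act g f) := rfl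

@[simp] lemma Ge_left (a : ℕ) : (Ge a).left = ofAdd (sing (alph a)) := rfl
@[simp] lemma Ge_right (a : ℕ) : (Ge a).right = SA a := rfl

def gam (a : ℕ) : Vv := fun k => if k = a + 1 then 1 else if k = a - 1 then -1 else 0

lemma SAfix1 {a b : ℕ} (h : a + 2 ≤ b) : SA a (alph b) = alph b := by
  funext k; simp only [SA_apply, sfun, alph]; split_ifs <;> first | omega | exact (‹False›).elim

lemma SAfix2 {a b : ℕ} (h : a + 2 ≤ b) : SA b (alph a) = alph a := by
  funext k; simp only [SA_apply, sfun, alph]; split_ifs <;> first | omega | exact (‹False›).elim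

lemma Sl1 {a : ℕ} (h : 1 ≤ a) : SA a (alph (a + 1)) = gam a := by
  funext k; simp only [SA_apply, sfun, alph, gam]; split_ifs <;> first | omega | exact (‹False›).elim

lemma Sl2 {a : ℕ} (h : 1 ≤ a) : SA (a + 1) (alph a) = gam a := by
  funext k; simp only [SA_apply, sfun, alph, gam]; split_ifs <;> first | omega | exact (‹False›).elim

lemma Sl3 {a : ℕ} (h : 1 ≤ a) : SA a (gam a) = alph (a + 1) := by
  funext k; simp only [SA_apply, sfun, alph, gam]; split_ifs <;> first | omega | exact (‹False›).elim

lemma Sl4 {a : ℕ} (h : 1 ≤ a) : SA (a + 1) (gam a) = alph a := by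
  funext k; simp only [SA_apply, sfun, alph, gam]; split_ifs <;> first | omega | exact (‹False›).elim

lemma comm2 {a b : ℕ} (h : a + 2 ≤ b) : Ge a * Ge b = Ge b * Ge a := by
  refine SemidirectProduct.ext ?_ ?_
  · simp only [Ge, SemidirectProduct.mul_left, phiH_ofAdd, act_sing, ← ofAdd_add,
      SAfix1 h, SAfix2 h]
    rw [add_comm]
  · refine AddEquiv.ext fun v => ?_
    funext k
    simp only [SemidirectProduct.mul_right, Ge_right, AddAut.mul_apply', SA_apply, sfun]
    split_ifs <;> subst_vars <;> first | rfl | exact neg_neg _ | omega | (congr 1; omega) | exact (‹False›).elim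

set_option maxHeartbeats 2000000 in
lemma braid3 {a : ℕ} (h : 1 ≤ a) :
    Ge a * (Ge (a+1) * Ge a) = Ge (a+1) * (Ge a * Ge (a+1)) := by
  refine SemidirectProduct.ext ?_ ?_
  · simp only [SemidirectProduct.mul_left, SemidirectProduct.mul_right, Ge_left, Ge_right,
      map_mul, phiH_ofAdd, act_sing]
    rw [Sl2 h, Sl3 h, Sl1 h, Sl4 h]
    simp [mul_comm, mul_left_comm]
  · refine AddEquiv.ext fun v => ?_
    funext k
    simp only [SemidirectProduct.mul_right, Ge_right, AddAut.mul_apply', SA_apply, sfun]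
    split_ifs <;> subst_vars <;> first | rfl | exact neg_neg _ | omega | (congr 1; omega) | exact (‹False›).elim

lemma braid4 : Ge 0 * (Ge 1 * (Ge 0 * Ge 1)) = Ge 1 * (Ge 0 * (Ge 1 * Ge 0)) := by
  refine SemidirectProduct.ext ?_ ?_
  · simp only [SemidirectProduct.mul_left, SemidirectProduct.mul_right, Ge_left, Ge_right,
      map_mul, phiH_ofAdd, act_sing, alph0_pt, alph1_pt, SA_apply, sfun0_pt, sfun1_pt]
    norm_num
    simp [mul_comm, mul_left_comm]
  · refine AddEquiv.ext fun v => ?_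
    funext k
    simp only [SemidirectProduct.mul_right, Ge_right, AddAut.mul_apply', SA_apply, sfun]
    split_ifs <;> subst_vars <;>
      first | rfl | exact neg_neg _ | omega | (congr 1; omega) | exact (‹False›).elim

def aprod {G : Type*} [Monoid G] (x y : G) : ℕ → G
  | 0 => 1
  | m + 1 => x * aprod y x m

lemma lift_altWord {α G : Type*} [Group G] (f : α → G) (i j : α) (m : ℕ) :
    FreeGroup.lift f (altWord i j m) = aprod (f i) (f j) m := by
  induction m generalizing i j with
  | zero => simp [altWord, aprod]
  | succ m ih => simp [altWord, aprod, ih]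

lemma key (n : ℕ) (i j : Fin n) (hij : i ≠ j) :
    aprod (Ge (i : ℕ)) (Ge (j : ℕ)) (BMat n i j) = aprod (Ge (j : ℕ)) (Ge (i : ℕ)) (BMat n i j) := by
  have hab : (i : ℕ) ≠ (j : ℕ) := fun h => hij (Fin.ext h)
  have hB : BMat n i j =
      (if ((i : ℕ) + 1 = j ∧ (i : ℕ) = 0) ∨ ((j : ℕ) + 1 = i ∧ (j : ℕ) = 0) then 4
        else if (i : ℕ) + 1 = j ∨ (j : ℕ) + 1 = i then 3 else 2) := by
    simp [BMat, hij]
  rw [hB]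
  by_cases h4 : ((i : ℕ) + 1 = j ∧ (i : ℕ) = 0) ∨ ((j : ℕ) + 1 = i ∧ (j : ℕ) = 0)
  · rw [if_pos h4]
    rcases h4 with ⟨hb, ha⟩ | ⟨hb, ha⟩
    · simp only [aprod, mul_one, ha, show (j : ℕ) = 1 by omega]
      exact braid4
    · simp only [aprod, mul_one, ha, show (i : ℕ) = 1 by omega]
      exact braid4.symm
  · rw [if_neg h4]
    by_cases h3 : (i : ℕ) + 1 = j ∨ (j : ℕ) + 1 = i
    · rw [if_pos h3]
      rcases h3 with h | h
      · have ha : 1 ≤ (i : ℕ) := by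
          rcases Nat.eq_zero_or_pos (i : ℕ) with h0 | h0
          · exact absurd (Or.inl ⟨h, h0⟩) h4
          · exact h0
        simp only [aprod, mul_one, ← h]
        exact braid3 ha
      · have ha : 1 ≤ (j : ℕ) := by
          rcases Nat.eq_zero_or_pos (j : ℕ) with h0 | h0
          · exact absurd (Or.inr ⟨h, h0⟩) h4
          · exact h0
        simp only [aprod, mul_one, ← h]
        exact (braid3 ha).symm
    · rw [if_neg h3]
      simp only [aprod, mul_one]
      rcases Nat.lt_or_ge (i : ℕ) (j : ℕ) with h | h
      · exact comm2 (by omega)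
      · exact (comm2 (a := (j : ℕ)) (b := (i : ℕ)) (by omega)).symm

lemma rels_one (n : ℕ) : ∀ r ∈ artinRels (BMat n),
    FreeGroup.lift (fun i : Fin n => Ge (i : ℕ)) r = 1 := by
  rintro r ⟨i, j, hij, -, rfl⟩
  rw [map_mul, map_inv, lift_altWord, lift_altWord, key n i j hij, mul_inv_cancel]

noncomputable def chiH (n : ℕ) : ArtinGroup (BMat n) →* H :=
  PresentedGroup.toGroup (f := fun i : Fin n => Ge (i : ℕ)) (rels_one n)

@[simp] lemma chiH_of (n : ℕ) (i : Fin n) : chiH n (σA (BMat n) i) = Ge (i : ℕ) :=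
  PresentedGroup.toGroup.of _

def Nsub : Subgroup H where
  carrier := {h | h.right = 1 ∧ ∀ v : Vv, toAdd h.left (-v) = toAdd h.left v}
  one_mem' := ⟨rfl, fun _ => rfl⟩
  mul_mem' := by
    rintro x y ⟨hx1, hx2⟩ ⟨hy1, hy2⟩
    refine ⟨?_, fun v => ?_⟩
    · rw [SemidirectProduct.mul_right, hx1, hy1, mul_one]
    · rw [SemidirectProduct.mul_left, hx1, map_one, MulAut.one_apply, toAdd_mul,
        Pi.add_apply, Pi.add_apply, hx2, hy2]
  inv_mem' := by
    rintro x ⟨hx1, hx2⟩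
    refine ⟨?_, fun v => ?_⟩
    · rw [SemidirectProduct.inv_right, hx1, inv_one]
    · rw [SemidirectProduct.inv_left, hx1, inv_one, map_one, MulAut.one_apply, toAdd_inv,
        Pi.neg_apply, Pi.neg_apply, hx2]

instance Nsub_normal : Nsub.Normal := by
  constructor
  rintro x ⟨hx1, hx2⟩ g
  have hconj : g * x * g⁻¹ =
      ⟨g.left * phiH g.right x.left * (g.left)⁻¹, 1⟩ := by
    refine SemidirectProduct.ext ?_ ?_
    · rw [SemidirectProduct.mul_left, SemidirectProduct.mul_left, SemidirectProduct.inv_left,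
        SemidirectProduct.mul_right, hx1, mul_one, ← MulAut.mul_apply, ← map_mul,
        mul_inv_cancel, map_one, MulAut.one_apply]
    · simp only [SemidirectProduct.mul_right, SemidirectProduct.inv_right, hx1, mul_one,
        mul_inv_cancel]
  rw [hconj]
  have hl : g.left * phiH g.right x.left * (g.left)⁻¹ = phiH g.right x.left := by
    rw [mul_comm g.left, mul_assoc, mul_inv_cancel, mul_one]
  rw [hl]
  refine ⟨rfl, fun v => ?_⟩
  have : toAdd (phiH g.right x.left) = act g.right (toAdd x.left) := rfl
  rw [this, act_apply, act_apply, map_neg, hx2]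

lemma SA_alph_self (a : ℕ) : SA a (alph a) = -(alph a) := by
  funext k
  simp only [SA_apply, sfun, alph, Pi.neg_apply]
  split_ifs <;> first | omega | exact (‹False›).elim

lemma sing_pair_symm (x : Vv) (v : Vv) :
    (sing x + sing (-x)) (-v) = (sing x + sing (-x)) v := by
  simp only [Pi.add_apply, sing]
  rw [show (-v = x) ↔ (v = -x) from neg_eq_iff_eq_neg, show (-v = -x) ↔ (v = x) from neg_inj]
  exact add_comm _ _

lemma Ge_sq_mem (a : ℕ) : (Ge a) * (Ge a) ∈ Nsub := by
  refine ⟨?_, fun v => ?_⟩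
  · rw [SemidirectProduct.mul_right, Ge_right]
    exact AddEquiv.ext (sfun_invol a)
  · rw [SemidirectProduct.mul_left, Ge_left, Ge_right, phiH_ofAdd, act_sing, SA_alph_self,
      ← ofAdd_add, toAdd_ofAdd]
    exact sing_pair_symm (alph a) v

lemma ker_chi (n : ℕ) (y : ArtinGroup (BMat n)) (hy : stdEpi (BMat n) y = 1) :
    chiH n y ∈ Nsub := by
  obtain ⟨w, rfl⟩ := PresentedGroup.mk_surjective (artinRels (BMat n)) y
  have hcomp : (stdEpi (BMat n)).comp (PresentedGroup.mk (artinRels (BMat n)))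
      = PresentedGroup.mk (coxRels (BMat n)) :=
    FreeGroup.ext_hom _ _ (fun x => by
      rw [MonoidHom.comp_apply]
      exact stdEpi_of (BMat n) x)
  have hcox : PresentedGroup.mk (coxRels (BMat n)) w = 1 := by
    rw [← hcomp]; exact hy
  have hmem : w ∈ Subgroup.normalClosure (coxRels (BMat n)) :=
    (QuotientGroup.eq_one_iff w).mp hcox
  have hcomp2 : (chiH n).comp (PresentedGroup.mk (artinRels (BMat n)))
      = FreeGroup.lift (fun i : Fin n => Ge (i : ℕ)) :=
    FreeGroup.ext_hom _ _ (fun x => by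
      rw [MonoidHom.comp_apply, FreeGroup.lift_apply_of]
      exact chiH_of n x)
  have : chiH n (PresentedGroup.mk (artinRels (BMat n)) w)
      = FreeGroup.lift (fun i : Fin n => Ge (i : ℕ)) w := by
    rw [← hcomp2]; rfl
  rw [this]
  haveI : (Nsub.comap (FreeGroup.lift (fun i : Fin n => Ge (i : ℕ)))).Normal :=
    Subgroup.Normal.comap Nsub_normal _
  have hle : Subgroup.normalClosure (coxRels (BMat n))
      ≤ Nsub.comap (FreeGroup.lift (fun i : Fin n => Ge (i : ℕ))) := by
    refine Subgroup.normalClosure_le_normal ?_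
    rintro r (har | ⟨i, rfl⟩)
    · rw [SetLike.mem_coe, Subgroup.mem_comap, rels_one n r har]
      exact Nsub.one_mem
    · rw [SetLike.mem_coe, Subgroup.mem_comap, map_pow, FreeGroup.lift_apply_of, pow_two]
      exact Ge_sq_mem (i : ℕ)
  exact Subgroup.mem_comap.mp (hle hmem)

noncomputable def c1m : Mm := sing (pt 1 0 0) + sing (pt 1 1 0)
noncomputable def c2m : Mm :=
  sing (pt (-1) 1 0) + sing (pt 0 1 0) + sing (pt 1 1 0) + sing (pt 0 1 1)
def R1 : AddAut Vv := SA 0 * SA 1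
def R2 : AddAut Vv := SA 1 * (SA 0 * (SA 1 * SA 2))

noncomputable def smk (f : Mm) (g : AddAut Vv) : H := ⟨ofAdd f, g⟩

lemma smk_mul (f f' : Mm) (g g' : AddAut Vv) :
    smk f g * smk f' g' = smk (f + act g f') (g * g') := rfl

@[simp] lemma smk_left (f : Mm) (g : AddAut Vv) : (smk f g).left = ofAdd f := rfl

lemma GE1 : Ge 0 * Ge 1 = smk c1m R1 := by
  rw [show Ge 0 = smk (sing (alph 0)) (SA 0) from rfl, show Ge 1 = smk (sing (alph 1)) (SA 1) from rfl,
    smk_mul]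
  congr 1
  rw [act_sing, alph0_pt, alph1_pt, SA_apply, sfun0_pt]
  norm_num [c1m]

lemma GE2 : Ge 1 * (Ge 0 * (Ge 1 * Ge 2)) = smk c2m R2 := by
  rw [show Ge 0 = smk (sing (alph 0)) (SA 0) from rfl, show Ge 1 = smk (sing (alph 1)) (SA 1) from rfl,
    show Ge 2 = smk (sing (alph 2)) (SA 2) from rfl, smk_mul, smk_mul, smk_mul]
  congr 1
  simp only [map_add, act_sing, ← AddAut.mul_apply', alph0_pt, alph1_pt, alph2_pt]
  simp only [AddAut.mul_apply', SA_apply, sfun0_pt, sfun1_pt, sfun2_pt]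
  norm_num [c2m]
  abel

lemma endgame (u₁ u₂ : Mm) (s₁ : ∀ v, u₁ (-v) = u₁ v) (s₂ : ∀ v, u₂ (-v) = u₂ v)
    (E : smk (u₁ + c1m) R1 * (smk (u₂ + c2m) R2 * smk (u₁ + c1m) R1)
       = smk (u₂ + c2m) R2 * (smk (u₁ + c1m) R1 * smk (u₂ + c2m) R2)) : False := by
  rw [smk_mul, smk_mul, smk_mul, smk_mul] at E
  have E0 : (u₁ + c1m) + act R1 ((u₂ + c2m) + act R2 (u₁ + c1m))
      = (u₂ + c2m) + act R2 ((u₁ + c1m) + act R1 (u₂ + c2m)) := by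
    have := congrArg (fun h : H => toAdd h.left) E
    simpa using this
  have E4 := congrArg (fun f : Mm =>
    f (pt 0 (-1) (-1)) + f (pt (-1) 0 1) + f (pt (-1) 1 0) + f (pt (-1) 0 (-1))) E0
  simp only [Pi.add_apply, act_apply, R1, R2, AddAut.mul_symm_apply', SA_symm_apply,
    sfun0_pt, sfun1_pt, sfun2_pt, c1m, c2m, sing_pt] at E4
  norm_num at E4
  have r1 : u₁ (pt 1 0 (-1)) = u₁ (pt (-1) 0 1) := by
    have h := s₁ (pt 1 0 (-1)); rw [neg_pt] at h; norm_num at h; exact h.symm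
  have r2 : u₁ (pt 0 (-1) 1) = u₁ (pt 0 1 (-1)) := by
    have h := s₁ (pt 0 (-1) 1); rw [neg_pt] at h; norm_num at h; exact h.symm
  have r3 : u₂ (pt 0 (-1) (-1)) = u₂ (pt 0 1 1) := by
    have h := s₂ (pt 0 (-1) (-1)); rw [neg_pt] at h; norm_num at h; exact h.symm
  rw [r1, r2, r3] at E4
  revert E4
  generalize u₁ (pt 0 (-1) (-1)) = x1
  generalize u₁ (pt (-1) (-1) 0) = x2
  generalize u₁ (pt (-1) 0 1) = x3
  generalize u₁ (pt 0 1 (-1)) = x4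
  generalize u₁ (pt (-1) 1 0) = x5
  generalize u₁ (pt (-1) 0 (-1)) = x6
  generalize u₂ (pt (-1) 0 (-1)) = y1
  generalize u₂ (pt 0 1 1) = y2
  generalize u₂ (pt 1 1 0) = y3
  generalize u₂ (pt 0 1 (-1)) = y4
  generalize u₂ (pt (-1) 0 1) = y5
  generalize u₂ (pt (-1) 1 0) = y6
  revert x1 x2 x3 x4 x5 x6 y1 y2 y3 y4 y5 y6
  decide

lemma altWord3 {α : Type*} (i j : α) :
    altWord i j 3 = FreeGroup.of i * (FreeGroup.of j * (FreeGroup.of i * 1)) := rfl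

lemma main_contra (n : ℕ) (hn : 3 ≤ n)
    (Φ : ArtinGroup (BMat n) →* ArtinGroup (BMat n))
    (h1 : stdEpi (BMat n) (Φ (σA (BMat n) ⟨1, by omega⟩))
        = sC (BMat n) ⟨0, by omega⟩ * sC (BMat n) ⟨1, by omega⟩)
    (h2 : stdEpi (BMat n) (Φ (σA (BMat n) ⟨2, by omega⟩))
        = sC (BMat n) ⟨1, by omega⟩ * (sC (BMat n) ⟨0, by omega⟩ *
            (sC (BMat n) ⟨1, by omega⟩ * sC (BMat n) ⟨2, by omega⟩))) :
    False := by
  have h0n : 0 < n := by omega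
  have h1n : 1 < n := by omega
  have h2n : 2 < n := by omega
  have hv0 : ((⟨0, h0n⟩ : Fin n) : ℕ) = 0 := rfl
  have hv1 : ((⟨1, h1n⟩ : Fin n) : ℕ) = 1 := rfl
  have hv2 : ((⟨2, h2n⟩ : Fin n) : ℕ) = 2 := rfl
  have k1 : stdEpi (BMat n) (Φ (σA (BMat n) ⟨1, h1n⟩)
      * (σA (BMat n) ⟨0, h0n⟩ * σA (BMat n) ⟨1, h1n⟩)⁻¹) = 1 := by
    simp only [map_mul, map_inv, stdEpi_of]
    rw [h1, mul_inv_cancel]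
  have k2 : stdEpi (BMat n) (Φ (σA (BMat n) ⟨2, h2n⟩)
      * (σA (BMat n) ⟨1, h1n⟩ * (σA (BMat n) ⟨0, h0n⟩
          * (σA (BMat n) ⟨1, h1n⟩ * σA (BMat n) ⟨2, h2n⟩)))⁻¹) = 1 := by
    simp only [map_mul, map_inv, stdEpi_of]
    rw [h2, mul_inv_cancel]
  obtain ⟨u1, m1s, hchiy1⟩ : ∃ u : Mm, (∀ v, u (-v) = u v) ∧
      chiH n (Φ (σA (BMat n) ⟨1, h1n⟩)
        * (σA (BMat n) ⟨0, h0n⟩ * σA (BMat n) ⟨1, h1n⟩)⁻¹) = smk u 1 := by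
    obtain ⟨m1r, m1s⟩ := ker_chi n _ k1
    refine ⟨_, m1s, ?_⟩
    refine SemidirectProduct.ext ?_ ?_
    · simp [smk]
    · exact m1r
  obtain ⟨u2, m2s, hchiy2⟩ : ∃ u : Mm, (∀ v, u (-v) = u v) ∧
      chiH n (Φ (σA (BMat n) ⟨2, h2n⟩)
        * (σA (BMat n) ⟨1, h1n⟩ * (σA (BMat n) ⟨0, h0n⟩
          * (σA (BMat n) ⟨1, h1n⟩ * σA (BMat n) ⟨2, h2n⟩)))⁻¹) = smk u 1 := by
    obtain ⟨m2r, m2s⟩ := ker_chi n _ k2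
    refine ⟨_, m2s, ?_⟩
    refine SemidirectProduct.ext ?_ ?_
    · simp [smk]
    · exact m2r
  have hB1 : chiH n (Φ (σA (BMat n) ⟨1, h1n⟩)) = smk (u1 + c1m) R1 := by
    have step : chiH n (Φ (σA (BMat n) ⟨1, h1n⟩))
        = chiH n (Φ (σA (BMat n) ⟨1, h1n⟩)
            * (σA (BMat n) ⟨0, h0n⟩ * σA (BMat n) ⟨1, h1n⟩)⁻¹)
          * chiH n (σA (BMat n) ⟨0, h0n⟩ * σA (BMat n) ⟨1, h1n⟩) := by
      rw [← map_mul, inv_mul_cancel_right]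
    rw [step, hchiy1, map_mul, chiH_of, chiH_of, hv0, hv1, GE1, smk_mul]
    simp only [act_one, one_mul]
  have hB2 : chiH n (Φ (σA (BMat n) ⟨2, h2n⟩)) = smk (u2 + c2m) R2 := by
    have step : chiH n (Φ (σA (BMat n) ⟨2, h2n⟩))
        = chiH n (Φ (σA (BMat n) ⟨2, h2n⟩)
            * (σA (BMat n) ⟨1, h1n⟩ * (σA (BMat n) ⟨0, h0n⟩
              * (σA (BMat n) ⟨1, h1n⟩ * σA (BMat n) ⟨2, h2n⟩)))⁻¹)
          * chiH n (σA (BMat n) ⟨1, h1n⟩ * (σA (BMat n) ⟨0, h0n⟩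
              * (σA (BMat n) ⟨1, h1n⟩ * σA (BMat n) ⟨2, h2n⟩))) := by
      rw [← map_mul, inv_mul_cancel_right]
    rw [step, hchiy2, map_mul, map_mul, map_mul, chiH_of, chiH_of, chiH_of,
      hv0, hv1, hv2, GE2, smk_mul]
    simp only [act_one, one_mul]
  have hm3 : BMat n ⟨1, h1n⟩ ⟨2, h2n⟩ = 3 := by
    simp [BMat, Fin.ext_iff]
  have hrel : altWord (⟨1, h1n⟩ : Fin n) ⟨2, h2n⟩ (BMat n ⟨1, h1n⟩ ⟨2, h2n⟩)
      * (altWord (⟨2, h2n⟩ : Fin n) ⟨1, h1n⟩ (BMat n ⟨1, h1n⟩ ⟨2, h2n⟩))⁻¹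
      ∈ artinRels (BMat n) :=
    ⟨⟨1, h1n⟩, ⟨2, h2n⟩, by simp [Fin.ext_iff], by rw [hm3]; omega, rfl⟩
  have hone : PresentedGroup.mk (artinRels (BMat n))
      (altWord (⟨1, h1n⟩ : Fin n) ⟨2, h2n⟩ (BMat n ⟨1, h1n⟩ ⟨2, h2n⟩)
        * (altWord (⟨2, h2n⟩ : Fin n) ⟨1, h1n⟩ (BMat n ⟨1, h1n⟩ ⟨2, h2n⟩))⁻¹) = 1 :=
    (QuotientGroup.eq_one_iff _).mpr (Subgroup.subset_normalClosure hrel)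
  rw [hm3, map_mul, map_inv, mul_inv_eq_one, altWord3, altWord3] at hone
  have hbr : σA (BMat n) ⟨1, h1n⟩ * (σA (BMat n) ⟨2, h2n⟩ * σA (BMat n) ⟨1, h1n⟩)
      = σA (BMat n) ⟨2, h2n⟩ * (σA (BMat n) ⟨1, h1n⟩ * σA (BMat n) ⟨2, h2n⟩) := by
    simpa [map_mul, σA, PresentedGroup.of] using hone
  have hbig := congrArg (fun z => chiH n (Φ z)) hbr
  simp only [map_mul] at hbig
  rw [hB1, hB2] at hbig
  exact endgame u1 u2 m1s m2s hbig

/-- For type `Bₙ`, `n ≥ 3`, no endomorphism `Φ` of the Artin group satisfies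
`μ ∘ Φ = ν_n^1`, nor (for `n` odd) `μ ∘ Φ = ν_n^2`. -/
theorem stmt_10 (n : ℕ) (hn : 3 ≤ n) :
    (¬ ∃ Φ : ArtinGroup (BMat n) →* ArtinGroup (BMat n),
        ∀ i, stdEpi (BMat n) (Φ (σA (BMat n) i)) = nu1B n i) ∧
    (n % 2 = 1 →
      ¬ ∃ Φ : ArtinGroup (BMat n) →* ArtinGroup (BMat n),
          ∀ i, stdEpi (BMat n) (Φ (σA (BMat n) i)) = nu2B n i) := by
  have h0n : 0 < n := by omega
  have h1n : 1 < n := by omega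
  have h2n : 2 < n := by omega
  have e1 : cB n 0 * sgB n 1 = sC (BMat n) ⟨0, h0n⟩ * sC (BMat n) ⟨1, h1n⟩ := by
    simp [cB, sgB, h0n, h1n]
  have e2 : cB n 1 * sgB n 2
      = sC (BMat n) ⟨1, h1n⟩ * (sC (BMat n) ⟨0, h0n⟩
          * (sC (BMat n) ⟨1, h1n⟩ * sC (BMat n) ⟨2, h2n⟩)) := by
    simp [cB, sgB, h0n, h1n, h2n, mul_assoc]
  constructor
  · rintro ⟨Φ, hΦ⟩
    have hh1 := hΦ ⟨1, h1n⟩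
    have hh2 := hΦ ⟨2, h2n⟩
    rw [show nu1B n ⟨1, h1n⟩ = cB n 0 * sgB n 1 from by simp [nu1B], e1] at hh1
    rw [show nu1B n ⟨2, h2n⟩ = cB n 1 * sgB n 2 from by simp [nu1B], e2] at hh2
    exact main_contra n hn Φ hh1 hh2
  · rintro - ⟨Φ, hΦ⟩
    have hh1 := hΦ ⟨1, h1n⟩
    have hh2 := hΦ ⟨2, h2n⟩
    rw [show nu2B n ⟨1, h1n⟩ = cB n 0 * sgB n 1 from by simp [nu2B], e1] at hh1
    rw [show nu2B n ⟨2, h2n⟩ = cB n 1 * sgB n 2 from by simp [nu2B], e2] at hh2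
    exact main_contra n hn Φ hh1 hh2
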